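/- arXiv:2005.02192 — 4 statements merged into one kernel-verified Lean document; each statement's English description precedes it below -/
import Mathlib

section
/- Let M ≥ 1 and let R ∈ ℂ^{M×M} be a positive semidefinite Hermitian matrix all of whose diagonal entries are nonzero (hence real and positive). Then the matrix D + L is invertible and every eigenvalue λ of the Gauss–Seidel iteration matrix T^GS = (D+L)⁻¹·Lᴴ satisfies |λ| ≤ 1. -/
open Matrix
open scoped ComplexOrder

/-- Gauss–Seidel for positive semidefinite Hermitian matrices with nonzero diagonal:
`D + L` is invertible and every eigenvalue of `(D+L)⁻¹ * Lᴴ` has absolute value `≤ 1`. -/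
theorem gauss_seidel_spectral_radius_le_one_of_posSemidef
    (M : ℕ) (hM : 1 ≤ M) (R : Matrix (Fin M) (Fin M) ℂ) (hR : R.PosSemidef)
    (hdiag : ∀ i, R i i ≠ 0)
    (D L : Matrix (Fin M) (Fin M) ℂ)
    (hD : D = Matrix.diagonal (fun i => R i i))
    (hL : ∀ i j, L i j = if j < i then R i j else 0) :
    IsUnit (D + L) ∧
      ∀ (lam : ℂ) (v : Fin M → ℂ), v ≠ 0 →
        ((D + L)⁻¹ * Lᴴ) *ᵥ v = lam • v → ‖lam‖ ≤ 1 := by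
  -- diagonal entries are real and positive
  have hdiagRe : ∀ i, ∃ r : ℝ, 0 < r ∧ R i i = (r : ℂ) := by
    intro i
    have h0 : 0 ≤ star (Pi.single i 1 : Fin M → ℂ) ⬝ᵥ R *ᵥ (Pi.single i 1) := hR.dotProduct_mulVec_nonneg _
    have he : star (Pi.single i 1 : Fin M → ℂ) ⬝ᵥ R *ᵥ (Pi.single i 1) = R i i := by
      simp [dotProduct, mulVec, Pi.single_apply, Finset.sum_ite_eq, dotProduct]
    rw [he] at h0
    rcases (Complex.nonneg_iff.mp h0) with ⟨hre, him⟩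
    refine ⟨(R i i).re, ?_, ?_⟩
    · rcases lt_or_eq_of_le hre with h | h
      · exact h
      · exfalso; apply hdiag i; apply Complex.ext <;> simp [← h, ← him]
    · apply Complex.ext <;> simp [← him]
  choose r hrpos hRr using hdiagRe
  -- lower triangularity
  have hDL : ∀ i j : Fin M, i < j → (D + L) i j = 0 := by
    intro i j hij
    simp [hD, hL, Matrix.diagonal_apply_ne _ (ne_of_lt hij), if_neg (asymm hij),
      Matrix.add_apply]
  have hdet : (D + L).det = ∏ i, R i i := by
    rw [Matrix.det_of_lowerTriangular (D + L) (fun i j hij => hDL i j hij)]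
    congr 1; funext i
    simp [hD, hL, Matrix.diagonal_apply_eq, Matrix.add_apply]
  have hunit : IsUnit (D + L) := by
    rw [Matrix.isUnit_iff_isUnit_det, hdet, isUnit_iff_ne_zero]
    exact Finset.prod_ne_zero_iff.mpr fun i _ => hdiag i
  refine ⟨hunit, ?_⟩
  intro lam v hv hev
  have hdetu : IsUnit (D + L).det := (Matrix.isUnit_iff_isUnit_det _).mp hunit
  -- R = D + L + Lᴴ
  have hRsum : R = D + L + Lᴴ := by
    funext i j
    simp only [Matrix.add_apply, Matrix.conjTranspose_apply, hD, hL, Matrix.diagonal_apply]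
    rcases lt_trichotomy i j with h | h | h
    · rw [if_neg (ne_of_lt h), if_neg (asymm h), if_pos h, hR.1.apply i j]
      ring
    · subst h; simp
    · rw [if_neg (ne_of_gt h), if_pos h, if_neg (asymm h)]
      simp
  -- from eigen equation: Lᴴ v = lam • ((D+L) v)
  have key : Lᴴ *ᵥ v = lam • ((D + L) *ᵥ v) := by
    have h1 : (D + L) *ᵥ (((D + L)⁻¹ * Lᴴ) *ᵥ v) = (D + L) *ᵥ (lam • v) := by rw [hev]
    rwa [Matrix.mulVec_mulVec, ← Matrix.mul_assoc, Matrix.mul_nonsing_inv _ hdetu,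
      Matrix.one_mul, Matrix.mulVec_smul] at h1
  set c : ℂ := star v ⬝ᵥ (L *ᵥ v) with hc
  set d : ℂ := star v ⬝ᵥ (D *ᵥ v) with hd
  -- star v ⬝ᵥ Lᴴ v = conj c
  have hconj : star v ⬝ᵥ (Lᴴ *ᵥ v) = starRingEnd ℂ c := by
    rw [hc, dotProduct_mulVec, ← star_mulVec, star_dotProduct]
    rfl
  -- d is real positive
  have hdre : d = ((∑ i, r i * Complex.normSq (v i) : ℝ) : ℂ) := by
    rw [hd, hD]
    simp only [dotProduct, mulVec_diagonal, Pi.star_apply, hRr]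
    push_cast
    congr 1; funext i
    rw [Complex.normSq_eq_conj_mul_self, Complex.star_def]
    ring
  have hrsum : 0 < ∑ i, r i * Complex.normSq (v i) := by
    obtain ⟨i0, hi0⟩ := Function.ne_iff.mp hv
    refine Finset.sum_pos' (fun i _ => mul_nonneg (le_of_lt (hrpos i)) (Complex.normSq_nonneg _))
      ⟨i0, Finset.mem_univ _, mul_pos (hrpos i0) ?_⟩
    simpa [Complex.normSq_pos] using hi0
  -- the eigen scalar identity
  have heq : starRingEnd ℂ c = lam * (d + c) := by
    have h2 := congrArg (fun w => star v ⬝ᵥ w) key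
    simp only [dotProduct_smul] at h2
    rw [hconj] at h2
    rw [h2, hd, hc, Matrix.add_mulVec, dotProduct_add, smul_eq_mul]
  -- q := vᴴ R v is nonneg real
  have hq : 0 ≤ d + c + starRingEnd ℂ c := by
    have h0 := hR.dotProduct_mulVec_nonneg v
    have h3 : star v ⬝ᵥ (R *ᵥ v) = d + c + starRingEnd ℂ c := by
      rw [hRsum, Matrix.add_mulVec, Matrix.add_mulVec, dotProduct_add, dotProduct_add, hconj]
    rwa [h3] at h0
  set s : ℝ := ∑ i, r i * Complex.normSq (v i)
  have hqre : 0 ≤ s + 2 * c.re := by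
    rcases Complex.nonneg_iff.mp hq with ⟨h1, _⟩
    simpa [hdre, Complex.add_re, Complex.conj_re, two_mul, add_assoc] using h1
  have hineq : Complex.normSq c ≤ Complex.normSq (d + c) := by
    rw [hdre]
    simp only [Complex.normSq_apply, Complex.add_re, Complex.add_im, Complex.ofReal_re,
      Complex.ofReal_im, zero_add]
    nlinarith [sq_nonneg c.im]
  have hdc : d + c ≠ 0 := by
    intro h0
    have h4 : Complex.normSq c = 0 :=
      le_antisymm (by simpa [h0] using hineq) (Complex.normSq_nonneg _)
    have hc0 : c = 0 := Complex.normSq_eq_zero.mp h4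
    rw [hc0, add_zero, hdre] at h0
    exact absurd (Complex.ofReal_eq_zero.mp h0) (ne_of_gt hrsum)
  -- finish
  have habs : ‖lam‖ * ‖d + c‖ = ‖c‖ := by
    rw [← norm_mul, ← heq, Complex.norm_conj]
  have hpos : 0 < ‖d + c‖ := norm_pos_iff.mpr hdc
  rw [← mul_le_mul_iff_left₀ hpos, one_mul, habs, Complex.norm_def, Complex.norm_def]
  exact Real.sqrt_le_sqrt hineq
end

section
/- Let M ≥ 1, let R ∈ ℂ^{M×M} be a positive definite Hermitian matrix with diagonal part D and strictly lower-triangular part L, and let ω be a real number with 0 < ω < 2. Then the matrix D + ωL is invertible and every eigenvalue λ of the successive over-relaxation (SOR) iteration matrix T^ω = (D + ωL)⁻¹·((ω−1)·D + ω·Lᴴ) satisfies |λ| < 1 (i.e., the spectral radius of T^ω is strictly less than 1). -/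
open Matrix
open scoped ComplexOrder

/-- SOR convergence for positive definite Hermitian matrices and `0 < ω < 2`:
`D + ωL` is invertible and every eigenvalue of
`(D + ωL)⁻¹ * ((ω−1)D + ωLᴴ)` has absolute value `< 1`. -/
theorem sor_spectral_radius_lt_one
    (M : ℕ) (hM : 1 ≤ M) (R : Matrix (Fin M) (Fin M) ℂ) (hR : R.PosDef)
    (D L : Matrix (Fin M) (Fin M) ℂ)
    (hD : D = Matrix.diagonal (fun i => R i i))
    (hL : ∀ i j, L i j = if j < i then R i j else 0)
    (ω : ℝ) (hω0 : 0 < ω) (hω2 : ω < 2) :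
    IsUnit (D + (ω : ℂ) • L) ∧
      ∀ (lam : ℂ) (v : Fin M → ℂ), v ≠ 0 →
        ((D + (ω : ℂ) • L)⁻¹ * (((ω : ℂ) - 1) • D + (ω : ℂ) • Lᴴ)) *ᵥ v = lam • v →
          ‖lam‖ < 1 := by
  have hdiag : ∀ i, (0 : ℂ) < R i i := by
    intro i
    have hne : (Pi.single i 1 : Fin M → ℂ) ≠ 0 := by
      intro h
      have := congrFun h i
      simp at this
    have h := hR.dotProduct_mulVec_pos (x := Pi.single i 1) hne
    simpa [Matrix.mulVec_single, dotProduct, Pi.single_apply,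
      Finset.sum_ite_eq', apply_ite] using h
  -- D + ωL is lower triangular
  set U := D + (ω : ℂ) • L with hUdef
  have hUtri : U.BlockTriangular OrderDual.toDual := by
    intro i j hij
    have hij' : i < j := hij
    simp [hUdef, hD, hL, Matrix.diagonal_apply_ne _ (ne_of_lt hij'),
      if_neg (not_lt.2 hij'.le)]
  have hUdiag : ∀ i, U i i = R i i := by
    intro i
    simp [hUdef, hD, hL]
  have hdet : U.det = ∏ i, R i i := by
    rw [Matrix.det_of_lowerTriangular U hUtri]
    exact Finset.prod_congr rfl fun i _ => hUdiag i
  have hdetne : U.det ≠ 0 := by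
    rw [hdet]
    exact Finset.prod_ne_zero_iff.2 fun i _ => (hdiag i).ne'
  have hunit : IsUnit U := by
    rw [Matrix.isUnit_iff_isUnit_det]
    exact isUnit_iff_ne_zero.2 hdetne
  refine ⟨hunit, ?_⟩
  intro lam v hv heig
  set A := ((ω : ℂ) - 1) • D + (ω : ℂ) • Lᴴ with hAdef
  have h1 : A *ᵥ v = lam • (U *ᵥ v) := by
    have h := congrArg (fun w => U *ᵥ w) heig
    simp only [Matrix.mulVec_mulVec, Matrix.mulVec_smul] at h
    rwa [← Matrix.mul_assoc, Matrix.mul_nonsing_inv U (isUnit_iff_ne_zero.2 hdetne), Matrix.one_mul] at h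
  set α : ℂ := star v ⬝ᵥ (D *ᵥ v) with hαdef
  set β : ℂ := star v ⬝ᵥ (L *ᵥ v) with hβdef
  have hLH : star v ⬝ᵥ (Lᴴ *ᵥ v) = starRingEnd ℂ β := by
    have : starRingEnd ℂ β = star β := rfl
    rw [this, hβdef, ← Matrix.star_dotProduct_star, star_star, Matrix.star_mulVec,
      Matrix.dotProduct_mulVec]
  -- positivity of α
  have hDpos : Matrix.PosDef D := by
    rw [hD]; exact Matrix.PosDef.diagonal hdiag
  have hαpos : 0 < α := hDpos.dotProduct_mulVec_pos hv
  -- R = D + L + Lᴴ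
  have hRdecomp : R = D + L + Lᴴ := by
    ext i j
    rcases lt_trichotomy i j with h | h | h
    · have : R i j = starRingEnd ℂ (R j i) := by
        conv_lhs => rw [← hR.1]
        simp [Matrix.conjTranspose_apply]
      simp [hD, hL, Matrix.diagonal_apply_ne _ (ne_of_lt h), Matrix.conjTranspose_apply,
        if_neg (not_lt.2 h.le), if_pos h, this]
    · subst h
      simp [hD, hL]
    · simp [hD, hL, Matrix.diagonal_apply_ne _ (ne_of_gt h), Matrix.conjTranspose_apply,
        if_pos h, if_neg (not_lt.2 h.le)]
  have hRvpos : 0 < α + β + starRingEnd ℂ β := by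
    have h := hR.dotProduct_mulVec_pos hv
    rw [hRdecomp] at h
    simpa [Matrix.add_mulVec, dotProduct_add, hαdef, hβdef, hLH, add_assoc] using h
  -- scalar eigen equation
  have heq : ((ω : ℂ) - 1) * α + (ω : ℂ) * starRingEnd ℂ β = lam * (α + (ω : ℂ) * β) := by
    have h := congrArg (fun w => star v ⬝ᵥ w) h1
    simp only [hAdef, hUdef, Matrix.add_mulVec, Matrix.smul_mulVec,
      dotProduct_add, dotProduct_smul, smul_eq_mul] at h
    rw [hLH] at h
    rw [h]
    try ring
  -- real components
  set a : ℝ := α.re with hadef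
  set p : ℝ := β.re with hpdef
  set q : ℝ := β.im with hqdef
  have hαre : 0 < a ∧ α.im = 0 := by
    rw [Complex.lt_def] at hαpos
    exact ⟨hαpos.1, hαpos.2.symm⟩
  have hapos : 0 < a := hαre.1
  have hαim : α.im = 0 := hαre.2
  have hsum : 0 < a + 2 * p := by
    rw [Complex.lt_def] at hRvpos
    have := hRvpos.1
    simp only [Complex.add_re, Complex.conj_re, Complex.zero_re] at this
    linarith [this]
  -- denominator
  set den : ℂ := α + (ω : ℂ) * β with hdendef
  set num : ℂ := ((ω : ℂ) - 1) * α + (ω : ℂ) * starRingEnd ℂ β with hnumdef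
  have hden_re : den.re = a + ω * p := by
    simp [hdendef, Complex.add_re, Complex.mul_re, hadef, hpdef]
  have hden_im : den.im = ω * q := by
    simp [hdendef, Complex.add_im, Complex.mul_im, hαim, hqdef]
  have hnum_re : num.re = (ω - 1) * a + ω * p := by
    simp [hnumdef, Complex.add_re, Complex.mul_re, Complex.sub_re, Complex.sub_im, hαim, hadef, hpdef]
  have hnum_im : num.im = -(ω * q) := by
    simp [hnumdef, Complex.add_im, Complex.mul_im, Complex.sub_re, Complex.sub_im, hαim, hqdef]
    try ring
  have hdenne : den ≠ 0 := by
    intro h0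
    have hre : a + ω * p = 0 := by rw [← hden_re, h0]; simp
    have him : ω * q = 0 := by rw [← hden_im, h0]; simp
    have hnum0 : num = 0 := by
      rw [heq, h0, mul_zero]
    have : (ω - 1) * a + ω * p = 0 := by rw [← hnum_re, hnum0]; simp
    nlinarith
  have hnormlt : Complex.normSq num < Complex.normSq den := by
    rw [Complex.normSq_apply, Complex.normSq_apply, hden_re, hden_im, hnum_re, hnum_im]
    nlinarith [mul_pos hapos hsum, mul_pos hω0 (sub_pos.2 hω2)]
  have hlam : lam = num / den := by
    rw [heq, mul_div_assoc, div_self hdenne, mul_one]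
  have habs : ‖num‖ < ‖den‖ := by
    rw [Complex.norm_def, Complex.norm_def]
    exact Real.sqrt_lt_sqrt (Complex.normSq_nonneg _) hnormlt
  rw [hlam, norm_div, div_lt_one (norm_pos_iff.2 hdenne)]
  exact habs
end

section
/- Let M ≥ 1, let D, L ∈ ℂ^{M×M} with D diagonal and L strictly lower-triangular, and suppose R = D + L + Lᴴ is positive definite Hermitian. Let λ ∈ ℂ and v ∈ ℂ^M with v ≠ 0 satisfy Lᴴ·v = λ·(D + L)·v (i.e., v is an eigenvector of the Gauss–Seidel iteration matrix (D+L)⁻¹·Lᴴ with eigenvalue λ). Set β = vᴴ·D·v (a positive real number), and write a = Re(vᴴ·L·v), b = Im(vᴴ·L·v). Then β + vᴴ·L·v ≠ 0, λ = (a − i·b)/(β + a + i·b), and |λ|² = (a² + b²)/((β + a)² + b²). -/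
open Matrix
open scoped ComplexOrder

/-- Formula for an eigenvalue of the Gauss–Seidel iteration matrix of a
positive definite Hermitian matrix `R = D + L + Lᴴ`. -/
theorem gauss_seidel_eigenvalue_formula
    (M : ℕ) (hM : 1 ≤ M) (D L : Matrix (Fin M) (Fin M) ℂ)
    (hDdiag : D.IsDiag) (hLlow : ∀ i j : Fin M, i ≤ j → L i j = 0)
    (hR : (D + L + Lᴴ).PosDef)
    (lam : ℂ) (v : Fin M → ℂ) (hv : v ≠ 0)
    (heig : Lᴴ *ᵥ v = lam • ((D + L) *ᵥ v))
    (β a b : ℝ)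
    (hβ : β = (star v ⬝ᵥ (D *ᵥ v)).re)
    (ha : a = (star v ⬝ᵥ (L *ᵥ v)).re)
    (hb : b = (star v ⬝ᵥ (L *ᵥ v)).im) :
    star v ⬝ᵥ (D *ᵥ v) = (β : ℂ) ∧ 0 < β ∧
    (β : ℂ) + star v ⬝ᵥ (L *ᵥ v) ≠ 0 ∧
    lam = ((a : ℂ) - Complex.I * (b : ℂ)) / ((β : ℂ) + (a : ℂ) + Complex.I * (b : ℂ)) ∧
    (‖lam‖) ^ 2 = (a ^ 2 + b ^ 2) / ((β + a) ^ 2 + b ^ 2) := by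
  classical
  set c : ℂ := star v ⬝ᵥ (L *ᵥ v) with hc
  -- diagonal entries of R are positive and equal D i i
  have hLdiag : ∀ i, L i i = 0 := fun i => hLlow i i le_rfl
  have hDii : ∀ i : Fin M, (0 : ℂ) < D i i := by
    intro i
    have h := hR.dotProduct_mulVec_pos (x := Pi.single i 1) (by
      intro h0
      have := congrFun h0 i
      simp at this)
    have hval : star (Pi.single i 1) ⬝ᵥ ((D + L + Lᴴ) *ᵥ Pi.single i 1) = D i i := by
      simp [mulVec_single, dotProduct, Pi.single_apply, conjTranspose_apply,
        Finset.sum_ite_eq', hLdiag i, apply_ite]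
    rwa [hval] at h
  -- D is positive definite
  have hDpd : D.PosDef := by
    have hDeq : Matrix.diagonal D.diag = D := hDdiag.diagonal_diag
    rw [← hDeq]
    exact Matrix.posDef_diagonal_iff.mpr fun i => hDii i
  have hDpos : (0 : ℂ) < star v ⬝ᵥ (D *ᵥ v) := hDpd.dotProduct_mulVec_pos hv
  have hDim : (star v ⬝ᵥ (D *ᵥ v)).im = 0 := by
    have := hDpos.le
    rw [Complex.le_def] at this
    simpa using this.2.symm
  have hDeqβ : star v ⬝ᵥ (D *ᵥ v) = (β : ℂ) := by
    apply Complex.ext <;> simp [hβ, hDim]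
  have hβpos : 0 < β := by
    have := hDpos
    rw [Complex.lt_def] at this
    simpa [hβ] using this.1
  -- star c computation
  have hA : star v ⬝ᵥ (Lᴴ *ᵥ v) = star c := by
    rw [hc, dotProduct_mulVec, ← star_mulVec, star_dotProduct, dotProduct_comm]
  -- c = a + I b
  have hcab : c = (a : ℂ) + Complex.I * (b : ℂ) := by
    apply Complex.ext <;> simp [ha, hb]
  -- positivity of R quadratic form: β + 2a > 0
  have hRpos : (0 : ℂ) < star v ⬝ᵥ ((D + L + Lᴴ) *ᵥ v) := hR.dotProduct_mulVec_pos hv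
  have hform : star v ⬝ᵥ ((D + L + Lᴴ) *ᵥ v) = (β : ℂ) + c + star c := by
    rw [add_mulVec, add_mulVec, dotProduct_add, dotProduct_add, hDeqβ, hA]
  have hβ2a : 0 < β + 2 * a := by
    rw [hform] at hRpos
    rw [Complex.lt_def] at hRpos
    have := hRpos.1
    simp [hcab, Complex.add_re] at this
    linarith
  have hβa : 0 < β + a := by linarith
  -- denominator nonzero
  have hden : (β : ℂ) + c ≠ 0 := by
    intro h0
    have : ((β : ℂ) + c).re = 0 := by rw [h0]; simp
    rw [hcab] at this
    simp at this
    linarith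
  -- eigenvalue relation
  have hrel : star c = lam * ((β : ℂ) + c) := by
    have h1 := congrArg (fun w => star v ⬝ᵥ w) heig
    simp only [dotProduct_smul, smul_eq_mul] at h1
    rw [hA, add_mulVec, dotProduct_add, hDeqβ, ← hc] at h1
    exact h1
  have hlam : lam = ((a : ℂ) - Complex.I * (b : ℂ)) / ((β : ℂ) + (a : ℂ) + Complex.I * (b : ℂ)) := by
    have hden' : (β : ℂ) + (a : ℂ) + Complex.I * (b : ℂ) ≠ 0 := by
      rw [hcab] at hden; convert hden using 1; ring
    rw [eq_div_iff hden']
    have : star c = (a : ℂ) - Complex.I * (b : ℂ) := by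
      rw [hcab]; apply Complex.ext <;> simp
    rw [← this, hrel, hcab]; ring
  refine ⟨hDeqβ, hβpos, hden, hlam, ?_⟩
  -- modulus
  rw [hlam, norm_div, div_pow, Complex.sq_norm, Complex.sq_norm]
  congr 1 <;> simp [Complex.normSq_apply] <;> ring
end

section
/- Let M ≥ 1, let D, L ∈ ℂ^{M×M} with D diagonal and L strictly lower-triangular, suppose R = D + L + Lᴴ is positive definite Hermitian, and let ω be a real number with 0 < ω < 2. Let λ ∈ ℂ and v ∈ ℂ^M with v ≠ 0 satisfy ((ω−1)·D + ω·Lᴴ)·v = λ·(D + ω·L)·v (i.e., v is an eigenvector of the SOR iteration matrix T^ω = (D+ωL)⁻¹·((ω−1)D + ωLᴴ) with eigenvalue λ). Set β = vᴴ·D·v (a positive real number), a = Re(vᴴ·L·v), b = Im(vᴴ·L·v). Then β + ω·(vᴴ·L·v) ≠ 0, λ·(β + ω·(a + i·b)) = (ω−1)·β + ω·(a − i·b), and |λ|² = (((ω−1)·β + ω·a)² + (ω·b)²)/((β + ω·a)² + (ω·b)²). -/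
open Matrix
open scoped ComplexOrder

/-- Formula for an eigenvalue of the SOR iteration matrix of a positive definite
Hermitian matrix `R = D + L + Lᴴ` with relaxation parameter `0 < ω < 2`. -/
theorem sor_eigenvalue_formula
    (M : ℕ) (hM : 1 ≤ M) (D L : Matrix (Fin M) (Fin M) ℂ)
    (hDdiag : D.IsDiag) (hLlow : ∀ i j : Fin M, i ≤ j → L i j = 0)
    (hR : (D + L + Lᴴ).PosDef)
    (ω : ℝ) (hω0 : 0 < ω) (hω2 : ω < 2)
    (lam : ℂ) (v : Fin M → ℂ) (hv : v ≠ 0)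
    (heig : (((ω : ℂ) - 1) • D + (ω : ℂ) • Lᴴ) *ᵥ v = lam • ((D + (ω : ℂ) • L) *ᵥ v))
    (β a b : ℝ)
    (hβ : β = (star v ⬝ᵥ (D *ᵥ v)).re)
    (ha : a = (star v ⬝ᵥ (L *ᵥ v)).re)
    (hb : b = (star v ⬝ᵥ (L *ᵥ v)).im) :
    star v ⬝ᵥ (D *ᵥ v) = (β : ℂ) ∧ 0 < β ∧
    (β : ℂ) + (ω : ℂ) * (star v ⬝ᵥ (L *ᵥ v)) ≠ 0 ∧
    lam * ((β : ℂ) + (ω : ℂ) * ((a : ℂ) + Complex.I * (b : ℂ)))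
      = ((ω : ℂ) - 1) * (β : ℂ) + (ω : ℂ) * ((a : ℂ) - Complex.I * (b : ℂ)) ∧
    ‖lam‖ ^ 2
      = (((ω - 1) * β + ω * a) ^ 2 + (ω * b) ^ 2) / ((β + ω * a) ^ 2 + (ω * b) ^ 2) := by
  -- diagonal entries of D are real and positive
  have hDii : ∀ i : Fin M, D i i = ((D i i).re : ℂ) ∧ 0 < (D i i).re := by
    intro i
    have h := hR.dotProduct_mulVec_pos (x := Pi.single i 1) (by
      intro h; have := congrFun h i; simp at this)
    have hs : star (Pi.single i (1:ℂ)) ⬝ᵥ ((D + L + Lᴴ) *ᵥ Pi.single i 1) = D i i := by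
      simp [mulVec_single, dotProduct, Pi.single_apply, apply_ite, conjTranspose_apply,
        hLlow i i le_rfl]
    rw [hs] at h
    rw [Complex.lt_def] at h
    simp at h
    exact ⟨(Complex.ext (by simp) (by simp [← h.2])), h.1⟩
  set cD : ℂ := star v ⬝ᵥ (D *ᵥ v) with hcD
  set cL : ℂ := star v ⬝ᵥ (L *ᵥ v) with hcL
  -- cD is a sum of positive-real multiples of |v i|²
  have hcDsum : cD = Complex.ofReal (∑ i, (D i i).re * Complex.normSq (v i)) := by
    rw [hcD]
    simp only [dotProduct, mulVec, dotProduct]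
    rw [Complex.ofReal_sum]
    refine Finset.sum_congr rfl fun i _ => ?_
    rw [Finset.sum_eq_single i (fun j _ hj => by rw [hDdiag (Ne.symm hj), zero_mul])
      (by simp)]
    rw [(hDii i).1, Complex.ofReal_mul, Complex.normSq_eq_conj_mul_self,
      Complex.ofReal_re]
    simp only [Pi.star_apply, Complex.star_def]
    ring
  have hβval : β = ∑ i, (D i i).re * Complex.normSq (v i) := by
    rw [hβ, hcDsum, Complex.ofReal_re]
  have hcDre : cD = (β : ℂ) := by rw [hcDsum, hβval]
  have hβpos : 0 < β := by
    rw [hβval]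
    obtain ⟨i0, hi0⟩ := Function.ne_iff.mp hv
    refine Finset.sum_pos' (fun i _ => ?_) ⟨i0, Finset.mem_univ _, ?_⟩
    · exact mul_nonneg (le_of_lt (hDii i).2) (Complex.normSq_nonneg _)
    · exact mul_pos (hDii i0).2 (by simpa [Complex.normSq_pos] using hi0)
  -- conjugate relation
  have hcLH : star v ⬝ᵥ (Lᴴ *ᵥ v) = star cL := by
    rw [hcL, star_dotProduct, star_mulVec, conjTranspose_conjTranspose, ← dotProduct_mulVec]
  -- β + 2a > 0 from positive definiteness applied to v
  have hRv := hR.dotProduct_mulVec_pos hv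
  have hRvs : star v ⬝ᵥ ((D + L + Lᴴ) *ᵥ v) = cD + cL + star cL := by
    simp [add_mulVec, dotProduct_add, hcLH, hcD, hcL]
  rw [hRvs, Complex.lt_def] at hRv
  have hba : 0 < β + 2 * a := by
    have h1 := hRv.1
    rw [hcDre] at h1
    simp only [Complex.zero_re, Complex.add_re, Complex.ofReal_re, Complex.star_def,
      Complex.conj_re] at h1
    rw [ha]; linarith
  have hden : 0 < β + ω * a := by nlinarith
  -- cL in terms of a, b
  have hcLab : cL = (a : ℂ) + Complex.I * (b : ℂ) := by
    rw [ha, hb]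
    exact Complex.ext (by simp) (by simp)
  have hstar : star ((a:ℂ) + Complex.I * (b:ℂ)) = (a:ℂ) - Complex.I * (b:ℂ) :=
    Complex.ext (by simp) (by simp)
  -- eigen equation dotted with star v
  have hkey : lam * ((β : ℂ) + (ω : ℂ) * cL)
      = ((ω : ℂ) - 1) * (β : ℂ) + (ω : ℂ) * star cL := by
    have h := congrArg (fun w => star v ⬝ᵥ w) heig
    simp only [add_mulVec, smul_mulVec, dotProduct_add, dotProduct_smul,
      smul_eq_mul] at h
    rw [← hcD, ← hcL, hcLH, hcDre] at h
    exact h.symm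
  have hdenC : (β : ℂ) + (ω : ℂ) * cL ≠ 0 := by
    intro h
    have h2 := congrArg Complex.re h
    simp [hcLab, Complex.add_re, Complex.mul_re] at h2
    nlinarith
  refine ⟨hcDre, hβpos, hdenC, ?_, ?_⟩
  · rw [← hcLab, hkey, hcLab, hstar]
  · -- modulus formula
    set den : ℂ := (β : ℂ) + (ω : ℂ) * cL with hdef
    have hnum : lam = (((ω : ℂ) - 1) * (β : ℂ) + (ω : ℂ) * star cL) / den := by
      field_simp [hdenC] at hkey ⊢
      linear_combination hkey
    have h1 : ‖lam‖ ^ 2 = Complex.normSq lam := (Complex.sq_norm lam)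
    rw [h1, hnum, Complex.normSq_div]
    congr 1
    · rw [hcLab, hstar, Complex.normSq_apply]
      simp [Complex.add_re, Complex.sub_re, Complex.mul_re, Complex.mul_im,
        Complex.add_im, Complex.sub_im]
      ring
    · rw [hdef, hcLab, Complex.normSq_apply]
      simp [Complex.add_re, Complex.mul_re, Complex.mul_im, Complex.add_im]
      ring
end
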